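/- Let H > 0, L > 0, \gamma \in (0,1), \mathcal{E} > 0 and Q = \mathcal{E} L/H. Let \mu^F = 1/(Q\gamma + 1 - \gamma), \mu^S = \mathcal{E}\mu^F, \tilde\mu^F = 1/(Q(1-\gamma) + \gamma), and define a = 2\gamma H, b = 2\tilde\mu^F \gamma H, c = 2\mu^S \gamma L. Then Q < 1 \iff b > a \iff a > c. -/

import Mathlib

theorem stmt8 (H L γ E : ℝ) (hH : 0 < H) (hL : 0 < L) (hγ : γ ∈ Set.Ioo (0:ℝ) 1)
    (hE : 0 < E) (Q μF μS tμF a b c : ℝ)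
    (hQ : Q = E * L / H)
    (hμF : μF = 1/(Q*γ + 1 - γ)) (hμS : μS = E * μF)
    (htμF : tμF = 1/(Q*(1-γ) + γ))
    (ha : a = 2*γ*H) (hb : b = 2*tμF*γ*H) (hc : c = 2*μS*γ*L) :
    (Q < 1 ↔ b > a) ∧ (b > a ↔ a > c) := by
  obtain ⟨hγ0, hγ1⟩ := hγ
  have hQ0 : 0 < Q := by rw [hQ]; positivity
  have hd1 : 0 < Q*(1-γ) + γ := by nlinarith
  have hd2 : 0 < Q*γ + 1 - γ := by nlinarith
  have hEL : E * L = Q * H := by rw [hQ]; field_simp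
  have ht : tμF * (Q*(1-γ) + γ) = 1 := by rw [htμF]; field_simp
  have hm : μF * (Q*γ + 1 - γ) = 1 := by rw [hμF]; field_simp
  have htpos : 0 < tμF := by rw [htμF]; positivity
  have hmpos : 0 < μF := by rw [hμF]; positivity
  have key1 : tμF - 1 = tμF * ((1-Q)*(1-γ)) := by linear_combination ht
  have key2 : 1 - μF*Q = μF * ((1-Q)*(1-γ)) := by linear_combination -hm
  have hca : a - c = 2*γ*H*(1 - μF*Q) := by
    rw [ha, hc, hμS]; linear_combination -2*μF*γ*hEL
  have hγH : 0 < 2*γ*H := by positivity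
  -- b > a ↔ 1 < tμF
  have hbiff : b > a ↔ 1 < tμF := by
    rw [hb, ha, show 2*tμF*γ*H = tμF*(2*γ*H) from by ring, gt_iff_lt]
    nth_rewrite 1 [show 2*γ*H = 1*(2*γ*H) from by ring]
    exact mul_lt_mul_iff_of_pos_right hγH
  -- a > c ↔ 0 < 1 - μF*Q
  have hciff : a > c ↔ 0 < 1 - μF*Q := by
    rw [gt_iff_lt, ← sub_pos, hca]
    exact mul_pos_iff_of_pos_left hγH
  -- Q < 1 ↔ 1 < tμF
  have hQiff : Q < 1 ↔ 1 < tμF := by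
    constructor
    · intro h
      have : 0 < tμF * ((1-Q)*(1-γ)) :=
        mul_pos htpos (mul_pos (by linarith) (by linarith))
      linarith [key1]
    · intro h
      by_contra hq
      push_neg at hq
      have h1 : (1-Q)*(1-γ) ≤ 0 :=
        mul_nonpos_of_nonpos_of_nonneg (by linarith) (by linarith)
      have h2 : tμF * ((1-Q)*(1-γ)) ≤ 0 :=
        mul_nonpos_of_nonneg_of_nonpos (le_of_lt htpos) h1
      linarith [key1]
  -- Q < 1 ↔ 0 < 1 - μF*Q
  have hQiff2 : Q < 1 ↔ 0 < 1 - μF*Q := by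
    constructor
    · intro h
      have : 0 < μF * ((1-Q)*(1-γ)) :=
        mul_pos hmpos (mul_pos (by linarith) (by linarith))
      linarith [key2]
    · intro h
      by_contra hq
      push_neg at hq
      have h1 : (1-Q)*(1-γ) ≤ 0 :=
        mul_nonpos_of_nonpos_of_nonneg (by linarith) (by linarith)
      have h2 : μF * ((1-Q)*(1-γ)) ≤ 0 :=
        mul_nonpos_of_nonneg_of_nonpos (le_of_lt hmpos) h1
      linarith [key2]
  exact ⟨hQiff.trans hbiff.symm,
    (hbiff.trans hQiff.symm).trans (hQiff2.trans hciff.symm)⟩
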